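/- There exists a universal constant C > 0 such that for all γ > 0 and all t > 0, ∑_{k=1}^{∞} (1/(8·γ·k²)) · (1 − e^{−8·γ·k²·t}) ≤ (C/γ) · min{√(γ·t), 1}. (Time-integrated L² bound on the discrete semigroup, corresponding to the third estimate of Lemma 3.1.) -/

import Mathlib

open Real Finset

lemma tail_sq (N : ℕ) : ∑' k : ℕ, (((k : ℝ) + N + 1) ^ 2)⁻¹ ≤ 2 / ((N : ℝ) + 1) := by
  apply Real.tsum_le_of_sum_range_le (fun k => by positivity)
  intro n
  have h := sum_Ioo_inv_sq_le (α := ℝ) N (N + 1 + n)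
  refine le_trans (le_of_eq ?_) h
  rw [← Finset.Ico_add_one_left_eq_Ioo, Finset.sum_Ico_eq_sum_range]
  have : N + 1 + n - (N + 1) = n := by omega
  rw [this]
  apply Finset.sum_congr rfl
  intro i _
  push_cast
  ring_nf

lemma sq_summable : Summable (fun k : ℕ => (((k : ℝ) + 1) ^ 2)⁻¹) := by
  have h : Summable (fun n : ℕ => 1 / (n : ℝ) ^ 2) :=
    Real.summable_one_div_nat_pow.mpr one_lt_two
  have := (summable_nat_add_iff 1).2 h
  refine this.congr fun n => ?_
  push_cast
  rw [one_div]

theorem time_integrated_L2_bound :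
    ∃ C : ℝ, 0 < C ∧
      ∀ γ t : ℝ, 0 < γ → 0 < t →
        (∑' k : ℕ, (1 / (8 * γ * ((k : ℝ) + 1) ^ 2)) *
            (1 - Real.exp (-8 * γ * ((k : ℝ) + 1) ^ 2 * t)))
          ≤ (C / γ) * min (Real.sqrt (γ * t)) 1 := by
  refine ⟨3, by norm_num, fun γ t hγ ht => ?_⟩
  set f : ℕ → ℝ := fun k =>
    (1 / (8 * γ * ((k : ℝ) + 1) ^ 2)) * (1 - Real.exp (-8 * γ * ((k : ℝ) + 1) ^ 2 * t)) with hf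
  have hA : ∀ k : ℕ, (0 : ℝ) < 8 * γ * ((k : ℝ) + 1) ^ 2 := fun k => by positivity
  have hexp_le : ∀ k : ℕ, Real.exp (-8 * γ * ((k : ℝ) + 1) ^ 2 * t) ≤ 1 := by
    intro k
    calc Real.exp (-8 * γ * ((k : ℝ) + 1) ^ 2 * t) ≤ Real.exp 0 :=
          Real.exp_le_exp.2 (by nlinarith [hA k, ht])
      _ = 1 := Real.exp_zero
  have hf0 : ∀ k, 0 ≤ f k := by
    intro k
    apply mul_nonneg (by positivity)
    linarith [hexp_le k]
  have hf_inv : ∀ k, f k ≤ (8 * γ)⁻¹ * (((k : ℝ) + 1) ^ 2)⁻¹ := by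
    intro k
    have h1 : 1 - Real.exp (-8 * γ * ((k : ℝ) + 1) ^ 2 * t) ≤ 1 := by
      linarith [Real.exp_pos (-8 * γ * ((k : ℝ) + 1) ^ 2 * t)]
    calc f k ≤ (1 / (8 * γ * ((k : ℝ) + 1) ^ 2)) * 1 :=
          mul_le_mul_of_nonneg_left h1 (by positivity)
      _ = (8 * γ)⁻¹ * (((k : ℝ) + 1) ^ 2)⁻¹ := by
          rw [mul_one, one_div, mul_inv]
  have hf_t : ∀ k, f k ≤ t := by
    intro k
    have h1 : 1 - Real.exp (-8 * γ * ((k : ℝ) + 1) ^ 2 * t) ≤ 8 * γ * ((k : ℝ) + 1) ^ 2 * t := by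
      have := Real.add_one_le_exp (-8 * γ * ((k : ℝ) + 1) ^ 2 * t)
      nlinarith
    calc f k ≤ (1 / (8 * γ * ((k : ℝ) + 1) ^ 2)) * (8 * γ * ((k : ℝ) + 1) ^ 2 * t) :=
          mul_le_mul_of_nonneg_left h1 (by positivity)
      _ = t := by field_simp
  have hsum : Summable f :=
    Summable.of_nonneg_of_le hf0 hf_inv (sq_summable.mul_left _)
  rcases le_or_gt 1 (γ * t) with hcase | hcase
  · -- γ t ≥ 1 : min = 1
    have hmin : min (Real.sqrt (γ * t)) 1 = 1 :=
      min_eq_right (Real.one_le_sqrt.2 hcase)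
    rw [hmin, mul_one]
    have h1 : (∑' k, f k) ≤ ∑' k : ℕ, (8 * γ)⁻¹ * (((k : ℝ) + 1) ^ 2)⁻¹ :=
      hsum.tsum_le_tsum hf_inv (sq_summable.mul_left _)
    rw [tsum_mul_left] at h1
    have h2 : (∑' k : ℕ, (((k : ℝ) + 1) ^ 2)⁻¹) ≤ 2 := by
      have := tail_sq 0
      simpa using this
    calc (∑' k, f k) ≤ (8 * γ)⁻¹ * ∑' k : ℕ, (((k : ℝ) + 1) ^ 2)⁻¹ := h1
      _ ≤ (8 * γ)⁻¹ * 2 := by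
          apply mul_le_mul_of_nonneg_left h2 (by positivity)
      _ ≤ 3 / γ := by
          rw [div_eq_mul_inv, mul_inv]
          nlinarith [inv_pos.2 hγ]
  · -- γ t < 1 : min = √(γ t)
    set s := Real.sqrt (γ * t) with hs
    have hs_pos : 0 < s := Real.sqrt_pos.2 (by positivity)
    have hs_sq : s ^ 2 = γ * t := Real.sq_sqrt (by positivity)
    have hs_lt1 : s < 1 := by
      nlinarith [hs_pos]
    have hmin : min s 1 = s := min_eq_left hs_lt1.le
    rw [hmin]
    set N : ℕ := ⌈1 / s⌉₊ with hN
    have hNge : 1 / s ≤ (N : ℝ) := Nat.le_ceil _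
    have hNle : (N : ℝ) ≤ 1 / s + 1 := (Nat.ceil_lt_add_one (by positivity)).le
    rw [← Summable.sum_add_tsum_nat_add N hsum]
    have hhead : (∑ i ∈ Finset.range N, f i) ≤ (N : ℝ) * t := by
      calc (∑ i ∈ Finset.range N, f i) ≤ ∑ _i ∈ Finset.range N, t :=
            Finset.sum_le_sum fun i _ => hf_t i
        _ = (N : ℝ) * t := by simp [mul_comm]
    have htail : (∑' k : ℕ, f (k + N)) ≤ (8 * γ)⁻¹ * (2 / ((N : ℝ) + 1)) := by
      have hb : ∀ k : ℕ, f (k + N) ≤ (8 * γ)⁻¹ * (((k : ℝ) + N + 1) ^ 2)⁻¹ := by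
        intro k
        have h := hf_inv (k + N)
        push_cast at h ⊢
        convert h using 3 <;> ring
      have hsumN : Summable (fun k : ℕ => f (k + N)) := (summable_nat_add_iff N).2 hsum
      have hsumb : Summable (fun k : ℕ => (8 * γ)⁻¹ * (((k : ℝ) + N + 1) ^ 2)⁻¹) := by
        have h := (summable_nat_add_iff N).2 sq_summable
        refine (h.congr fun k => ?_).mul_left _
        push_cast
        ring_nf
      calc (∑' k : ℕ, f (k + N)) ≤ ∑' k : ℕ, (8 * γ)⁻¹ * (((k : ℝ) + N + 1) ^ 2)⁻¹ :=
            hsumN.tsum_le_tsum hb hsumb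
        _ = (8 * γ)⁻¹ * ∑' k : ℕ, (((k : ℝ) + N + 1) ^ 2)⁻¹ := tsum_mul_left
        _ ≤ (8 * γ)⁻¹ * (2 / ((N : ℝ) + 1)) :=
            mul_le_mul_of_nonneg_left (tail_sq N) (by positivity)
    have hNinv : 2 / ((N : ℝ) + 1) ≤ 2 * s := by
      rw [div_le_iff₀ (by positivity)]
      have h : 1 / s ≤ (N : ℝ) + 1 := by linarith
      rw [div_le_iff₀ hs_pos] at h
      nlinarith
    have ht_eq : t = s ^ 2 / γ := by
      field_simp
      linarith [hs_sq]
    calc (∑ i ∈ Finset.range N, f i) + ∑' k : ℕ, f (k + N)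
        ≤ (N : ℝ) * t + (8 * γ)⁻¹ * (2 * s) := by
          refine add_le_add hhead (htail.trans ?_)
          exact mul_le_mul_of_nonneg_left hNinv (by positivity)
      _ ≤ (1 / s + 1) * t + (8 * γ)⁻¹ * (2 * s) := by
          apply add_le_add_left (mul_le_mul_of_nonneg_right hNle ht.le)
      _ ≤ 3 / γ * s := by
          rw [ht_eq]
          have h8 : (8 * γ)⁻¹ * (2 * s) = s / (4 * γ) := by
            field_simp
            ring
          have h1 : (1 / s + 1) * (s ^ 2 / γ) = (s + s ^ 2) / γ := by
            field_simp
          rw [h8, h1]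
          rw [div_add_div _ _ (by positivity : (γ:ℝ) ≠ 0) (by positivity : (4*γ:ℝ) ≠ 0)]
          rw [div_le_iff₀ (by positivity), div_mul_eq_mul_div, div_mul_eq_mul_div,
            le_div_iff₀ (by positivity)]
          have hss : s ^ 2 ≤ s := by nlinarith
          nlinarith [hss, mul_pos hγ hγ, hs_pos.le]
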